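/- For all non-negative integers n and m, A_{n,m} = Σ_{k=-∞}^{∞} (-1)^k · C(2n, n+k) · C(2m, m+k), where the sum ranges over all integers k with |k| ≤ min(n,m) (von Szily's identity). -/

import Mathlib

open Finset

private def bq (N : ℕ) (j : ℤ) : ℚ :=
  if 0 ≤ j ∧ j ≤ (N : ℤ) then (N.choose j.toNat : ℚ) else 0

private lemma bq_eq_zero {N : ℕ} {j : ℤ} (h : j < 0 ∨ (N : ℤ) < j) : bq N j = 0 := by
  unfold bq; rw [if_neg]; omega

private lemma bq_pascal (N : ℕ) (j : ℤ) : bq (N + 1) j = bq N (j - 1) + bq N j := by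
  unfold bq
  by_cases h0 : 0 ≤ j
  · obtain ⟨t, rfl⟩ := Int.eq_ofNat_of_zero_le h0
    rcases t with _ | s
    · rw [if_pos ⟨by norm_num, by positivity⟩, if_neg (by norm_num),
        if_pos ⟨by norm_num, by positivity⟩]
      norm_num
    · by_cases hs : (s : ℤ) + 1 ≤ N + 1
      · rw [if_pos (by push_cast; omega)]
        by_cases hsN : (s : ℤ) + 1 ≤ N
        · rw [if_pos (by push_cast; omega), if_pos (by push_cast; omega)]
          have h1 : ((s+1 : ℕ) : ℤ).toNat = s + 1 := by omega
          have h2 : (((s+1 : ℕ) : ℤ) - 1).toNat = s := by omega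
          rw [h1, h2, Nat.choose_succ_succ]
          push_cast; ring
        · have hNs : N = s := by omega
          subst hNs
          rw [if_pos (by push_cast; omega), if_neg (by push_cast; omega)]
          have h1 : ((N+1 : ℕ) : ℤ).toNat = N + 1 := by omega
          have h2 : (((N+1 : ℕ) : ℤ) - 1).toNat = N := by omega
          rw [h1, h2]
          simp [Nat.choose_self, Nat.choose_succ_self]
      · rw [if_neg (by push_cast; omega), if_neg (by push_cast; omega),
          if_neg (by push_cast; omega)]; ring
  · rw [if_neg (by omega), if_neg (by omega), if_neg (by omega)]; ring

/-- the summand -/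
private def fq (n m : ℕ) (k : ℤ) : ℚ :=
  (-1 : ℚ) ^ k * (bq (2 * n) ((n : ℤ) + k) * bq (2 * m) ((m : ℤ) + k))

private lemma fq_zero {n m : ℕ} {k : ℤ} (h : k < -(min n m : ℤ) ∨ ((min n m : ℕ) : ℤ) < k) :
    fq n m k = 0 := by
  unfold fq
  have h' : ((n : ℤ) + k < 0 ∨ (2*n : ℕ) < (n : ℤ) + k) ∨
      ((m : ℤ) + k < 0 ∨ (2*m : ℕ) < (m : ℤ) + k) := by push_cast at h ⊢; omega
  rcases h' with h' | h'
  · rw [bq_eq_zero h']; ring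
  · rw [bq_eq_zero h']; ring

private noncomputable def Sq (n m : ℕ) (L : ℤ) : ℚ := ∑ k ∈ Icc (-L) L, fq n m k

private lemma Sq_extend {n m : ℕ} {L : ℤ} (hL : ((min n m : ℕ) : ℤ) ≤ L) :
    Sq n m L = Sq n m ((min n m : ℕ) : ℤ) := by
  unfold Sq
  refine (Finset.sum_subset (Finset.Icc_subset_Icc (by omega) hL) ?_).symm
  intro x hx hx'
  simp only [Finset.mem_Icc] at hx hx'
  exact fq_zero (by omega)

/-- shift lemma : sum over Icc(-L,L) of g(k) = sum over Icc(-L-1,L-1) of g(j+1) -/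
private lemma sum_shift (L : ℤ) (g : ℤ → ℚ) :
    ∑ k ∈ Icc (-L) L, g k = ∑ j ∈ Icc (-L-1) (L-1), g (j+1) := by
  refine Finset.sum_nbij' (fun k => k - 1) (fun j => j + 1) ?_ ?_ ?_ ?_ ?_
  · intro a ha; simp only [Finset.mem_Icc] at *; omega
  · intro a ha; simp only [Finset.mem_Icc] at *; omega
  · intro a _; omega
  · intro a _; omega
  · intro a _; rw [show a - 1 + 1 = a by omega]

private lemma Sq_rec (n m : ℕ) (L : ℤ) (hL : (n : ℤ) + m + 2 ≤ L) :
    Sq (n+1) m L + Sq n (m+1) L = 4 * Sq n m L := by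
  -- auxiliary sums
  set Pm := ∑ k ∈ Icc (-L) L, (-1:ℚ)^k * (bq (2*n) ((n:ℤ) + k - 1) * bq (2*m) ((m:ℤ) + k)) with hPm
  set Pp := ∑ k ∈ Icc (-L) L, (-1:ℚ)^k * (bq (2*n) ((n:ℤ) + k + 1) * bq (2*m) ((m:ℤ) + k)) with hPp
  set Qm := ∑ k ∈ Icc (-L) L, (-1:ℚ)^k * (bq (2*n) ((n:ℤ) + k) * bq (2*m) ((m:ℤ) + k - 1)) with hQm
  set Qp := ∑ k ∈ Icc (-L) L, (-1:ℚ)^k * (bq (2*n) ((n:ℤ) + k) * bq (2*m) ((m:ℤ) + k + 1)) with hQp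
  have hfst : Sq (n+1) m L = Pm + 2 * Sq n m L + Pp := by
    unfold Sq fq
    rw [hPm, hPp]
    rw [Finset.mul_sum, ← Finset.sum_add_distrib, ← Finset.sum_add_distrib]
    refine Finset.sum_congr rfl fun k _ => ?_
    have e1 : 2 * (n+1) = (2*n + 1) + 1 := by ring
    have e2 : ((n:ℤ)+1) + k = ((n:ℤ) + k) + 1 := by push_cast; ring
    rw [e1, bq_pascal, bq_pascal, bq_pascal]
    have e3 : (((n+1):ℕ):ℤ) + k - 1 - 1 = (n:ℤ) + k - 1 := by push_cast; ring
    have e4 : (((n+1):ℕ):ℤ) + k - 1 = (n:ℤ) + k := by push_cast; ring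
    have e5 : (((n+1):ℕ):ℤ) + k = (n:ℤ) + k + 1 := by push_cast; ring
    rw [e3, e4, e5]
    ring
  have hsnd : Sq n (m+1) L = Qm + 2 * Sq n m L + Qp := by
    unfold Sq fq
    rw [hQm, hQp]
    rw [Finset.mul_sum, ← Finset.sum_add_distrib, ← Finset.sum_add_distrib]
    refine Finset.sum_congr rfl fun k _ => ?_
    have e1 : 2 * (m+1) = (2*m + 1) + 1 := by ring
    rw [e1, bq_pascal, bq_pascal, bq_pascal]
    have e3 : (((m+1):ℕ):ℤ) + k - 1 - 1 = (m:ℤ) + k - 1 := by push_cast; ring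
    have e4 : (((m+1):ℕ):ℤ) + k - 1 = (m:ℤ) + k := by push_cast; ring
    have e5 : (((m+1):ℕ):ℤ) + k = (m:ℤ) + k + 1 := by push_cast; ring
    rw [e3, e4, e5]
    ring
  -- Pm = -Qp
  have hPQ : Pm = -Qp := by
    rw [hPm, sum_shift L (fun k => (-1:ℚ)^k * (bq (2*n) ((n:ℤ) + k - 1) * bq (2*m) ((m:ℤ) + k)))]
    rw [hQp]
    have key : ∀ j : ℤ,
        (-1:ℚ)^(j+1) * (bq (2*n) ((n:ℤ) + (j+1) - 1) * bq (2*m) ((m:ℤ) + (j+1))) =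
        -((-1:ℚ)^j * (bq (2*n) ((n:ℤ) + j) * bq (2*m) ((m:ℤ) + j + 1))) := by
      intro j
      rw [zpow_add₀ (by norm_num : (-1:ℚ) ≠ 0), zpow_one]
      have : (n:ℤ) + (j+1) - 1 = (n:ℤ) + j := by ring
      rw [this]
      have : (m:ℤ) + (j+1) = (m:ℤ) + j + 1 := by ring
      rw [this]
      ring
    rw [Finset.sum_congr rfl (fun j _ => key j), Finset.sum_neg_distrib]
    congr 1
    -- sum over Icc(-L-1, L-1)  =  sum over Icc(-L, L) : boundary terms vanish
    have hs1 : Icc (-L-1) (L-1) ⊆ Icc (-L-1) L := Finset.Icc_subset_Icc (le_refl _) (by omega)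
    have hs2 : Icc (-L) L ⊆ Icc (-L-1) L := Finset.Icc_subset_Icc (by omega) (le_refl _)
    rw [Finset.sum_subset hs1 ?h1, Finset.sum_subset hs2 ?h2]
    case h1 =>
      intro x hx hx'
      simp only [Finset.mem_Icc] at hx hx'
      have hx0 : x = L := by omega
      subst hx0
      rw [bq_eq_zero (Or.inr (by push_cast; omega))]
      ring
    case h2 =>
      intro x hx hx'
      simp only [Finset.mem_Icc] at hx hx'
      have hx0 : x = -L-1 := by omega
      subst hx0
      rw [bq_eq_zero (Or.inl (by push_cast; omega))]
      ring
  -- Pp = -Qm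
  have hPQ2 : Pp = -Qm := by
    rw [hQm, sum_shift L (fun k => (-1:ℚ)^k * (bq (2*n) ((n:ℤ) + k) * bq (2*m) ((m:ℤ) + k - 1)))]
    rw [hPp]
    have key : ∀ j : ℤ,
        (-1:ℚ)^(j+1) * (bq (2*n) ((n:ℤ) + (j+1)) * bq (2*m) ((m:ℤ) + (j+1) - 1)) =
        -((-1:ℚ)^j * (bq (2*n) ((n:ℤ) + j + 1) * bq (2*m) ((m:ℤ) + j))) := by
      intro j
      rw [zpow_add₀ (by norm_num : (-1:ℚ) ≠ 0), zpow_one]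
      have : (n:ℤ) + (j+1) = (n:ℤ) + j + 1 := by ring
      rw [this]
      have : (m:ℤ) + (j+1) - 1 = (m:ℤ) + j := by ring
      rw [this]
      ring
    rw [Finset.sum_congr rfl (fun j _ => key j), Finset.sum_neg_distrib]
    rw [neg_neg]
    -- sum over Icc(-L-1, L-1)  =  sum over Icc(-L, L)
    have hs1 : Icc (-L-1) (L-1) ⊆ Icc (-L-1) L := Finset.Icc_subset_Icc (le_refl _) (by omega)
    have hs2 : Icc (-L) L ⊆ Icc (-L-1) L := Finset.Icc_subset_Icc (by omega) (le_refl _)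
    rw [Finset.sum_subset hs1 ?h1, Finset.sum_subset hs2 ?h2]
    case h1 =>
      intro x hx hx'
      simp only [Finset.mem_Icc] at hx hx'
      have hx0 : x = L := by omega
      subst hx0
      rw [bq_eq_zero (Or.inr (by push_cast; omega)) (N := 2*n)]
      ring
    case h2 =>
      intro x hx hx'
      simp only [Finset.mem_Icc] at hx hx'
      have hx0 : x = -L-1 := by omega
      rw [bq_eq_zero (Or.inl (by subst hx0; push_cast; omega)) (N := 2*m)]
      ring
  rw [hfst, hsnd, hPQ, hPQ2]
  ring

private def Aq (n m : ℕ) : ℚ :=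
  (Nat.factorial (2 * n) * Nat.factorial (2 * m) : ℚ) /
    (Nat.factorial n * Nat.factorial (n + m) * Nat.factorial m)

private lemma fact_ne (k : ℕ) : (Nat.factorial k : ℚ) ≠ 0 := by
  exact_mod_cast Nat.factorial_ne_zero k

private lemma Aq_rec (n m : ℕ) : Aq (n+1) m + Aq n (m+1) = 4 * Aq n m := by
  unfold Aq
  have e1 : 2 * (n+1) = (2*n + 1) + 1 := by ring
  have e2 : 2 * (m+1) = (2*m + 1) + 1 := by ring
  have e3 : (n+1) + m = (n + m) + 1 := by ring
  have e4 : n + (m+1) = (n + m) + 1 := by ring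
  rw [e1, e2, e3, e4]
  simp only [Nat.factorial_succ]
  push_cast
  field_simp
  ring

private lemma key (n : ℕ) : ∀ m : ℕ, Aq n m = Sq n m ((min n m : ℕ) : ℤ) := by
  induction n with
  | zero =>
    intro m
    rw [Nat.min_eq_left (Nat.zero_le m)]
    unfold Sq fq bq Aq
    rw [Nat.cast_zero, neg_zero, Finset.Icc_self, Finset.sum_singleton]
    rw [if_pos (by norm_num), if_pos ⟨by positivity, by push_cast; omega⟩]
    have ht : ((m:ℤ) + 0).toNat = m := by omega
    rw [ht]
    have hle : m ≤ 2 * m := by omega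
    have hkey := Nat.choose_mul_factorial_mul_factorial hle
    have h2 : 2 * m - m = m := by omega
    rw [h2] at hkey
    norm_num
    rw [← hkey]
    push_cast
    field_simp
  | succ n ih =>
    intro m
    have h1 : Aq (n+1) m = 4 * Aq n m - Aq n (m+1) := by
      have := Aq_rec n m; linarith
    rw [h1, ih m, ih (m+1)]
    set L : ℤ := (n : ℤ) + m + 2 with hLdef
    have hrec := Sq_rec n m L (by omega)
    have hA : Sq n m L = Sq n m ((min n m : ℕ) : ℤ) := Sq_extend (by push_cast; omega)
    have hB : Sq n (m+1) L = Sq n (m+1) ((min n (m+1) : ℕ) : ℤ) := Sq_extend (by push_cast; omega)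
    have hC : Sq (n+1) m L = Sq (n+1) m ((min (n+1) m : ℕ) : ℤ) := Sq_extend (by push_cast; omega)
    rw [← hA, ← hB, ← hC]
    linarith

theorem von_szily (n m : ℕ) :
    ((Nat.factorial (2 * n) * Nat.factorial (2 * m) : ℚ) /
        (Nat.factorial n * Nat.factorial (n + m) * Nat.factorial m)) =
      ∑ k ∈ Finset.Icc (-(min n m : ℤ)) (min n m),
        (-1 : ℚ) ^ k * (Nat.choose (2 * n) ((n : ℤ) + k).toNat : ℚ) *
          (Nat.choose (2 * m) ((m : ℤ) + k).toNat : ℚ) := by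
  have h := key n m
  unfold Aq Sq at h
  rw [h]
  have hset : Icc (-((min n m : ℕ) : ℤ)) ((min n m : ℕ) : ℤ) = Icc (-(min n m : ℤ)) (min n m) := by
    push_cast; rfl
  rw [hset]
  refine Finset.sum_congr rfl fun k hk => ?_
  simp only [Finset.mem_Icc] at hk
  unfold fq bq
  rw [if_pos (by push_cast at hk ⊢; omega), if_pos (by push_cast at hk ⊢; omega)]
  ring
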